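/- Let (H, ⟨·,·⟩) be a real Hilbert space with norm ‖·‖ and let D ⊆ H be a dense linear subspace. Let q : D × D → ℝ be a symmetric bilinear form such that: (a) q is semi-bounded from below, i.e. there exists c ∈ ℝ with q(u,u) ≥ c‖u‖² for all u ∈ D; (b) there exist a nondecreasing sequence of real numbers (ν_i)_{i≥1} and an orthonormal Hilbert basis (g_i)_{i≥1} of H with g_i ∈ D and q(g_i, v) = ν_i ⟨g_i, v⟩ for all i ≥ 1 and all v ∈ D. Let N ≥ 1 and m ≥ 1 be integers, let F ⊆ D be an m-dimensional linear subspace, and let ξ_1 ≤ … ≤ ξ_m be the eigenvalues of the restriction of q to F, i.e. there exists an orthonormal basis (f_1,…,f_m) of F such that q(f_i, f) = ξ_i ⟨f_i, f⟩ for all f ∈ F and all i. Assume there exist positive constants γ and δ such that: (H1) 0 < δ < γ/√2; (H2) |ν_{N+i−1}| ≤ γ for all i ∈ {1,…,m}, ν_{N+m} ≥ γ, and, if N ≥ 2, ν_{N−1} ≤ −γ; (H3) |q(φ, g)| ≤ δ ‖φ‖ ‖g‖ for all g ∈ D and all φ ∈ F. Then |ν_{N+i−1} − ξ_i| ≤ 4δ²/γ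 for every i ∈ {1,…,m}. -/

import Mathlib

open Real Filter


private lemma aux_core
    {H : Type*} [NormedAddCommGroup H] [InnerProductSpace ℝ H] [CompleteSpace H]
    (D : Submodule ℝ H)
    (q : D →ₗ[ℝ] D →ₗ[ℝ] ℝ)
    (hsymm : ∀ u v : D, q u v = q v u)
    (ν : ℕ → ℝ) (hν : ∀ i j : ℕ, 1 ≤ i → i ≤ j → ν i ≤ ν j)
    (g : ℕ → D)
    (hg_orth : Orthonormal ℝ (fun i : ℕ => ((g (i + 1) : H))))
    (hg_tot :
      (Submodule.span ℝ (Set.range (fun i : ℕ => ((g (i + 1) : H))))).topologicalClosure = ⊤)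
    (hg_eig : ∀ i : ℕ, 1 ≤ i → ∀ v : D,
      q (g i) v = ν i * (inner ℝ ((g i : H)) ((v : H)) : ℝ))
    (N m : ℕ) (hN : 1 ≤ N) (hm : 1 ≤ m)
    (F : Submodule ℝ D)
    (γ δ : ℝ) (hγ : 0 < γ) (hδ : 0 < δ)
    (hH2b : γ ≤ ν (N + m))
    (hH2c : 2 ≤ N → ν (N - 1) ≤ -γ)
    (hH3 : ∀ (w : D) (φ : F), |q (φ : D) w| ≤ δ * ‖((φ : D) : H)‖ * ‖(w : H)‖)
    (φ : F) :
    ∃ R : ℝ, q (φ : D) (φ : D) =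
        (∑ j ∈ Finset.Ico (N-1) (N+m-1),
          ν (j+1) * (inner ℝ ((g (j+1) : H)) (((φ:D) : H)) : ℝ)^2) + R ∧
      γ * |R| ≤ δ^2 * ‖((φ:D) : H)‖^2 ∧
      γ^2 * (‖((φ:D) : H)‖^2 -
        ∑ j ∈ Finset.Ico (N-1) (N+m-1), (inner ℝ ((g (j+1) : H)) (((φ:D) : H)) : ℝ)^2)
          ≤ δ^2 * ‖((φ:D) : H)‖^2 ∧
      ∑ j ∈ Finset.Ico (N-1) (N+m-1), (inner ℝ ((g (j+1) : H)) (((φ:D) : H)) : ℝ)^2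
        ≤ ‖((φ:D) : H)‖^2 := by

  set x : H := ((φ : D) : H) with hx
  set A : ℕ → ℝ := fun j => (inner ℝ ((g (j+1) : H)) x : ℝ) with hA
  have hqg : ∀ j : ℕ, q (φ : D) (g (j+1)) = ν (j+1) * A j := by
    intro j
    rw [hsymm]
    exact hg_eig (j+1) (Nat.le_add_left 1 j) (φ : D)
  have hqT : ∀ (c : ℕ → ℝ) (s : Finset ℕ),
      q (φ : D) (∑ j ∈ s, c j • g (j+1)) = ∑ j ∈ s, c j * (ν (j+1) * A j) := by
    intro c s
    rw [map_sum]
    exact Finset.sum_congr rfl fun j _ => by rw [map_smul, smul_eq_mul, hqg]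
  have hcoe : ∀ (c : ℕ → ℝ) (s : Finset ℕ),
      ((∑ j ∈ s, c j • g (j+1) : D) : H) = ∑ j ∈ s, c j • ((g (j+1) : H)) := by
    intro c s
    push_cast
    rfl
  -- Hilbert basis
  have hsp : ⊤ ≤ (Submodule.span ℝ
      (Set.range (fun i : ℕ => ((g (i + 1) : H))))).topologicalClosure := hg_tot.ge
  have hxsum : HasSum (fun j => A j • ((g (j+1) : H))) x := by
    have hbe := funext_iff.mp (HilbertBasis.coe_mk hg_orth hsp)
    have h := (HilbertBasis.mk hg_orth hsp).hasSum_repr x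
    simp only [HilbertBasis.repr_apply_apply, hbe] at h
    exact h
  have hPar : HasSum (fun j => A j ^ 2) (‖x‖^2) := by
    have hbe := funext_iff.mp (HilbertBasis.coe_mk hg_orth hsp)
    have h := (HilbertBasis.mk hg_orth hsp).hasSum_inner_mul_inner x x
    simp only [hbe] at h
    have h2 : ∀ i : ℕ, (inner ℝ x ((g (i+1) : H)) : ℝ) * inner ℝ ((g (i+1) : H)) x = A i ^ 2 := by
      intro i
      rw [real_inner_comm ((g (i+1) : H)) x]
      exact (sq _).symm
    simp only [h2] at h
    rw [real_inner_self_eq_norm_sq] at h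
    exact h
  have hExp : HasSum (fun j => ν (j+1) * A j ^ 2) (q (φ : D) (φ : D)) := by
    have key : ∀ s : Finset ℕ, ∑ j ∈ s, ν (j+1) * A j ^ 2 =
        q (φ : D) (φ : D) - q (φ : D) ((φ : D) - ∑ j ∈ s, A j • g (j+1)) := by
      intro s
      rw [map_sub, hqT]
      have : ∑ j ∈ s, A j * (ν (j+1) * A j) = ∑ j ∈ s, ν (j+1) * A j ^ 2 :=
        Finset.sum_congr rfl fun j _ => by ring
      rw [this]
      ring
    have herr : Tendsto (fun s : Finset ℕ => q (φ : D) ((φ : D) - ∑ j ∈ s, A j • g (j+1)))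
        atTop (nhds 0) := by
      apply squeeze_zero_norm
        (a := fun s : Finset ℕ => δ * ‖x‖ * ‖x - ∑ j ∈ s, A j • ((g (j+1) : H))‖)
      · intro s
        have h3 := hH3 ((φ : D) - ∑ j ∈ s, A j • g (j+1)) φ
        rw [Real.norm_eq_abs]
        have hc : (((φ : D) - ∑ j ∈ s, A j • g (j+1) : D) : H)
            = x - ∑ j ∈ s, A j • ((g (j+1) : H)) := by
          push_cast
          rfl
        rwa [hc] at h3
      · have h1 : Tendsto (fun s : Finset ℕ => x - ∑ j ∈ s, A j • ((g (j+1) : H)))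
            atTop (nhds 0) := by
          have := tendsto_const_nhds (x := x) (f := atTop (α := Finset ℕ)) |>.sub hxsum
          simpa using this
        have h2 := h1.norm
        rw [norm_zero] at h2
        have := h2.const_mul (δ * ‖x‖)
        simpa [mul_assoc] using this
    have := (tendsto_const_nhds (x := q (φ : D) (φ : D))
      (f := atTop (α := Finset ℕ))).sub herr
    rw [sub_zero] at this
    exact this.congr fun s => (key s).symm
  -- uniform finite-sum bound
  have hFS : ∀ s : Finset ℕ, ∑ j ∈ s, (ν (j+1) * A j)^2 ≤ δ^2 * ‖x‖^2 := by
    intro s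
    set w : D := ∑ j ∈ s, (ν (j+1) * A j) • g (j+1) with hw
    have h1 : q (φ : D) w = ∑ j ∈ s, (ν (j+1) * A j)^2 := by
      rw [hw, hqT]
      exact Finset.sum_congr rfl fun j _ => by ring
    have h2 : ‖(w : H)‖^2 = ∑ j ∈ s, (ν (j+1) * A j)^2 := by
      rw [hw, hcoe, ← real_inner_self_eq_norm_sq, sum_inner]
      rw [Finset.sum_congr rfl (fun j hj => inner_sum s _ _)]
      rw [Finset.sum_congr rfl (fun j hj => Finset.sum_congr rfl fun l hl => by
        rw [real_inner_smul_left, real_inner_smul_right,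
          orthonormal_iff_ite.mp hg_orth j l])]
      simp [Finset.sum_ite_eq, pow_two]
    have h3 : ∑ j ∈ s, (ν (j+1) * A j)^2 ≤ δ * ‖x‖ * ‖(w : H)‖ := by
      rw [← h1]
      exact le_trans (le_abs_self _) (hH3 w φ)
    nlinarith [norm_nonneg (w : H), norm_nonneg x, h2, h3,
      sq_nonneg (δ * ‖x‖ - ‖(w : H)‖), mul_nonneg (mul_nonneg hδ.le (norm_nonneg x)) (norm_nonneg (w:H))]
  have hS2 : Summable (fun j => (ν (j+1) * A j)^2) :=
    summable_of_sum_le (fun j => sq_nonneg _) hFS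
  have hS2sum : ∑' j, (ν (j+1) * A j)^2 ≤ δ^2 * ‖x‖^2 := hS2.tsum_le_of_sum_le hFS
  set Win : Finset ℕ := Finset.Ico (N-1) (N+m-1) with hWin
  have hout : ∀ j : ℕ, j ∉ Win → γ ≤ |ν (j+1)| := by
    intro j hj
    rw [hWin, Finset.mem_Ico] at hj
    push_neg at hj
    rcases lt_or_ge j (N-1) with h | h
    · have hN2 : 2 ≤ N := by omega
      have := hν (j+1) (N-1) (by omega) (by omega)
      have := hH2c hN2
      exact le_abs.mpr (Or.inr (by linarith))
    · have hjm := hj h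
      have := hν (N+m) (j+1) (by omega) (by omega)
      exact le_abs.mpr (Or.inl (by linarith))
  have hqsum : Summable (fun j => ν (j+1) * A j ^ 2) := hExp.summable
  set R : ℝ := ∑' (j : ((Win : Set ℕ)ᶜ : Set ℕ)), (ν ((j:ℕ)+1) * A (j:ℕ) ^ 2) with hR
  have hqeq : q (φ:D) (φ:D) = (∑ j ∈ Win, ν (j+1) * A j ^ 2) + R := by
    have h := Summable.sum_add_tsum_compl (s := Win) hqsum
    rw [hExp.tsum_eq] at h
    exact h.symm
  have hsubP : Summable (fun j : ((Win : Set ℕ)ᶜ : Set ℕ) => (ν ((j:ℕ)+1) * A (j:ℕ))^2) :=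
    hS2.subtype _
  have htsubP : ∑' (j : ((Win : Set ℕ)ᶜ : Set ℕ)), (ν ((j:ℕ)+1) * A (j:ℕ))^2
      ≤ δ^2 * ‖x‖^2 := by
    refine le_trans (Summable.tsum_le_tsum_of_inj (Subtype.val) Subtype.val_injective
      (fun c _ => sq_nonneg _) (fun b => le_refl _) hsubP hS2) hS2sum
  have houtmem : ∀ j : ((Win : Set ℕ)ᶜ : Set ℕ), γ ≤ |ν ((j:ℕ)+1)| := by
    rintro ⟨j, hj⟩
    exact hout j (by simpa using hj)
  have hT1 : γ * |R| ≤ δ^2 * ‖x‖^2 := by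
    have hb1 : ∀ j : ((Win : Set ℕ)ᶜ : Set ℕ),
        |ν ((j:ℕ)+1) * A (j:ℕ) ^ 2| ≤ (ν ((j:ℕ)+1) * A (j:ℕ))^2 / γ := by
      intro j
      have hg := houtmem j
      rw [le_div_iff₀ hγ, abs_mul, abs_of_nonneg (sq_nonneg (A (j:ℕ)))]
      nlinarith [mul_nonneg (mul_nonneg (sub_nonneg.mpr hg) (abs_nonneg (ν ((j:ℕ)+1))))
        (sq_nonneg (A (j:ℕ))), sq_abs (ν ((j:ℕ)+1)), sq_nonneg (A (j:ℕ))]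
    have hsumabs : Summable (fun j : ((Win : Set ℕ)ᶜ : Set ℕ) => |ν ((j:ℕ)+1) * A (j:ℕ) ^ 2|) :=
      Summable.of_nonneg_of_le (fun j => abs_nonneg _) hb1 (hsubP.div_const γ)
    have h2 : |R| ≤ ∑' (j : ((Win : Set ℕ)ᶜ : Set ℕ)), |ν ((j:ℕ)+1) * A (j:ℕ) ^ 2| := by
      have hn := norm_tsum_le_tsum_norm
        (f := fun j : ((Win : Set ℕ)ᶜ : Set ℕ) => ν ((j:ℕ)+1) * A (j:ℕ) ^ 2)
        (by simp only [Real.norm_eq_abs]; exact hsumabs)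
      simp only [Real.norm_eq_abs] at hn
      rw [hR]
      exact hn
    have h3 : ∑' (j : ((Win : Set ℕ)ᶜ : Set ℕ)), |ν ((j:ℕ)+1) * A (j:ℕ) ^ 2|
        ≤ ∑' (j : ((Win : Set ℕ)ᶜ : Set ℕ)), (ν ((j:ℕ)+1) * A (j:ℕ))^2 / γ :=
      Summable.tsum_le_tsum hb1 hsumabs (hsubP.div_const γ)
    have h4 : ∑' (j : ((Win : Set ℕ)ᶜ : Set ℕ)), (ν ((j:ℕ)+1) * A (j:ℕ))^2 / γ
        = (∑' (j : ((Win : Set ℕ)ᶜ : Set ℕ)), (ν ((j:ℕ)+1) * A (j:ℕ))^2) / γ :=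
      tsum_div_const
    have h5 : |R| ≤ (δ^2 * ‖x‖^2) / γ := by
      rw [h4] at h3
      exact le_trans h2 (le_trans h3 ((div_le_div_iff_of_pos_right hγ).mpr htsubP))
    rw [mul_comm]
    exact (le_div_iff₀ hγ).mp h5
  have hsubA : Summable (fun j : ((Win : Set ℕ)ᶜ : Set ℕ) => A (j:ℕ) ^ 2) :=
    hPar.summable.subtype _
  have hT2 : ∑' (j : ((Win : Set ℕ)ᶜ : Set ℕ)), A (j:ℕ) ^ 2 ≤ (δ^2 * ‖x‖^2) / γ^2 := by
    have hb1 : ∀ j : ((Win : Set ℕ)ᶜ : Set ℕ),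
        A (j:ℕ) ^ 2 ≤ (ν ((j:ℕ)+1) * A (j:ℕ))^2 / γ^2 := by
      intro j
      have hg := houtmem j
      rw [le_div_iff₀ (by positivity : (0:ℝ) < γ^2)]
      nlinarith [mul_nonneg (mul_nonneg (sub_nonneg.mpr hg) (add_nonneg (abs_nonneg (ν ((j:ℕ)+1))) hγ.le))
        (sq_nonneg (A (j:ℕ))), sq_abs (ν ((j:ℕ)+1)), sq_nonneg (A (j:ℕ))]
    have h3 := Summable.tsum_le_tsum hb1 hsubA (hsubP.div_const (γ^2))
    rw [tsum_div_const] at h3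
    exact le_trans h3 ((div_le_div_iff_of_pos_right (by positivity : (0:ℝ) < γ^2)).mpr htsubP)
  have hneq : ‖x‖^2 = (∑ j ∈ Win, A j ^ 2) + ∑' (j : ((Win : Set ℕ)ᶜ : Set ℕ)), A (j:ℕ) ^ 2 := by
    have h := Summable.sum_add_tsum_compl (s := Win) hPar.summable
    rw [hPar.tsum_eq] at h
    exact h.symm
  have hWle : ∑ j ∈ Win, A j ^ 2 ≤ ‖x‖^2 :=
    sum_le_hasSum Win (fun _ _ => sq_nonneg _) hPar
  have hWge : γ^2 * (‖x‖^2 - ∑ j ∈ Win, A j ^ 2) ≤ δ^2 * ‖x‖^2 := by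
    have h5 : ‖x‖^2 - ∑ j ∈ Win, A j ^ 2
        = ∑' (j : ((Win : Set ℕ)ᶜ : Set ℕ)), A (j:ℕ) ^ 2 := by linarith [hneq]
    rw [h5, mul_comm]
    exact (le_div_iff₀ (by positivity : (0:ℝ) < γ^2)).mp hT2
  exact ⟨R, hqeq, hT1, hWge, hWle⟩


private lemma aux_ker {V : Type*} [AddCommGroup V] [Module ℝ V] {m : ℕ} (hm : 1 ≤ m)
    (hdim : Module.finrank ℝ V = m) (L : V →ₗ[ℝ] (Fin (m-1) → ℝ)) :
    ∃ v : V, v ≠ 0 ∧ L v = 0 := by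
  have hfd : FiniteDimensional ℝ V := FiniteDimensional.of_finrank_pos (by omega)
  have h1 : Module.finrank ℝ (LinearMap.range L) ≤ m - 1 := by
    have h := (LinearMap.range L).finrank_le
    simpa [Module.finrank_pi] using h
  have h2 := LinearMap.finrank_range_add_finrank_ker L
  rw [hdim] at h2
  have h3 : 0 < Module.finrank ℝ (LinearMap.ker L) := by omega
  have : Nontrivial (LinearMap.ker L) := Module.nontrivial_of_finrank_pos h3
  obtain ⟨v, hv⟩ := exists_ne (0 : LinearMap.ker L)
  refine ⟨v.1, ?_, LinearMap.mem_ker.mp v.2⟩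
  simpa [Submodule.coe_eq_zero] using hv

private lemma aux_fin
    {H : Type*} [NormedAddCommGroup H] [InnerProductSpace ℝ H]
    (D : Submodule ℝ H)
    (q : D →ₗ[ℝ] D →ₗ[ℝ] ℝ)
    (m : ℕ)
    (F : Submodule ℝ D)
    (ξ : ℕ → ℝ)
    (f : ℕ → F)
    (hf_orth : Orthonormal ℝ (fun i : Fin m => (((f ((i : ℕ) + 1) : D) : H))))
    (hf_span : Submodule.span ℝ (Set.range (fun i : Fin m => f ((i : ℕ) + 1)))
      = (⊤ : Submodule ℝ F))
    (hf_eig : ∀ i : ℕ, 1 ≤ i → i ≤ m → ∀ w : F,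
      q (f i : D) (w : D) = ξ i * (inner ℝ (((f i : D) : H)) (((w : D) : H)) : ℝ))
    (φ : F) :
    q (φ : D) (φ : D) = ∑ k : Fin m, ξ ((k:ℕ)+1) *
        ((inner ℝ (((f ((k:ℕ)+1) : D) : H)) (((φ:D) : H)) : ℝ))^2 ∧
      ‖((φ:D) : H)‖^2 = ∑ k : Fin m, ((inner ℝ (((f ((k:ℕ)+1) : D) : H)) (((φ:D) : H)) : ℝ))^2 := by
  set ι : F →ₗ[ℝ] H := D.subtype.comp F.subtype with hι
  have hιa : ∀ ψ : F, ι ψ = ((ψ : D) : H) := fun ψ => rfl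
  have li : LinearIndependent ℝ (fun k : Fin m => f ((k:ℕ)+1)) :=
    LinearIndependent.of_comp ι hf_orth.linearIndependent
  set B : Module.Basis (Fin m) ℝ F := Module.Basis.mk li hf_span.ge with hB
  set d : Fin m → ℝ := fun k => B.repr φ k with hd
  have hrepr : ∑ k : Fin m, d k • f ((k:ℕ)+1) = φ := by
    have h := B.sum_repr φ
    simp only [hB, Module.Basis.coe_mk] at h
    exact h
  have hH1 : ((φ : D) : H) = ∑ k : Fin m, d k • (((f ((k:ℕ)+1) : D)) : H) := by
    rw [← hιa φ, ← hrepr, map_sum]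
    exact Finset.sum_congr rfl fun k _ => by rw [map_smul]; rfl
  have hc : ∀ l : Fin m, (inner ℝ (((f ((l:ℕ)+1) : D)) : H) (((φ:D)) : H) : ℝ) = d l := by
    intro l
    rw [hH1]
    exact hf_orth.inner_right_fintype d l
  constructor
  · have h1 : (φ : D) = ∑ k : Fin m, d k • ((f ((k:ℕ)+1) : D)) := by
      rw [← hrepr]
      push_cast
      rfl
    calc q (φ : D) (φ : D) = q (∑ k : Fin m, d k • ((f ((k:ℕ)+1) : D))) (φ : D) := by rw [← h1]
      _ = ∑ k : Fin m, d k * q ((f ((k:ℕ)+1) : D)) (φ : D) := by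
          rw [map_sum, LinearMap.sum_apply]
          exact Finset.sum_congr rfl fun k _ => by
            rw [map_smul, LinearMap.smul_apply, smul_eq_mul]
      _ = ∑ k : Fin m, ξ ((k:ℕ)+1) * ((inner ℝ (((f ((k:ℕ)+1) : D) : H)) (((φ:D) : H)) : ℝ))^2 := by
          refine Finset.sum_congr rfl fun k _ => ?_
          rw [hf_eig ((k:ℕ)+1) (Nat.le_add_left 1 _) (by omega) φ, hc k]
          ring
  · rw [← real_inner_self_eq_norm_sq, hH1]
    rw [sum_inner]
    refine Finset.sum_congr rfl fun k _ => ?_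
    rw [real_inner_smul_left, hf_orth.inner_right_fintype d k]
    ring


private lemma aux_ker2 {V : Type*} [AddCommGroup V] [Module ℝ V] {m a b : ℕ}
    (hdim : Module.finrank ℝ V = m) (hab : a + b < m)
    (L1 : V →ₗ[ℝ] (Fin a → ℝ)) (L2 : V →ₗ[ℝ] (Fin b → ℝ)) :
    ∃ v : V, v ≠ 0 ∧ L1 v = 0 ∧ L2 v = 0 := by
  have hfd : FiniteDimensional ℝ V := FiniteDimensional.of_finrank_pos (by omega)
  set L := L1.prod L2 with hL
  have h1 : Module.finrank ℝ (LinearMap.range L) ≤ a + b := by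
    have h := (LinearMap.range L).finrank_le
    simpa [Module.finrank_prod, Module.finrank_pi] using h
  have h2 := LinearMap.finrank_range_add_finrank_ker L
  rw [hdim] at h2
  have h3 : 0 < Module.finrank ℝ (LinearMap.ker L) := by omega
  have : Nontrivial (LinearMap.ker L) := Module.nontrivial_of_finrank_pos h3
  obtain ⟨v, hv⟩ := exists_ne (0 : LinearMap.ker L)
  have hker := LinearMap.mem_ker.mp v.2
  exact ⟨v.1, by simpa [Submodule.coe_eq_zero] using hv,
    congrArg Prod.fst hker, congrArg Prod.snd hker⟩

set_option maxHeartbeats 1000000 in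
/-- Abstract eigenvalue-approximation lemma (Proposition 3.4(i)): in a real Hilbert space
`H`, let `q` be a symmetric, semibounded bilinear form on a dense subspace `D` admitting a
nondecreasing sequence of eigenvalues `ν_i` (`i ≥ 1`) with eigenvectors `g_i ∈ D` forming
an orthonormal Hilbert basis of `H`. Let `F ⊆ D` be an `m`-dimensional subspace on which
`q` has eigenvalues `ξ_1 ≤ … ≤ ξ_m` (with respect to an orthonormal basis of `F`). If
`0 < δ < γ/√2`, `|ν_{N+i−1}| ≤ γ` for `i = 1, …, m`, `ν_{N+m} ≥ γ`, `ν_{N−1} ≤ −γ` when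
`N ≥ 2`, and `|q(φ, g)| ≤ δ‖φ‖‖g‖` for all `φ ∈ F`, `g ∈ D`, then
`|ν_{N+i−1} − ξ_i| ≤ 4δ²/γ` for every `i = 1, …, m`. -/
theorem stmt0
    {H : Type*} [NormedAddCommGroup H] [InnerProductSpace ℝ H] [CompleteSpace H]
    (D : Submodule ℝ H) (hdense : Dense (D : Set H))
    (q : D →ₗ[ℝ] D →ₗ[ℝ] ℝ)
    (hsymm : ∀ u v : D, q u v = q v u)
    (hsb : ∃ c : ℝ, ∀ u : D, c * ‖(u : H)‖ ^ 2 ≤ q u u)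
    (ν : ℕ → ℝ) (hν : ∀ i j : ℕ, 1 ≤ i → i ≤ j → ν i ≤ ν j)
    (g : ℕ → D)
    (hg_orth : Orthonormal ℝ (fun i : ℕ => ((g (i + 1) : H))))
    (hg_tot :
      (Submodule.span ℝ (Set.range (fun i : ℕ => ((g (i + 1) : H))))).topologicalClosure = ⊤)
    (hg_eig : ∀ i : ℕ, 1 ≤ i → ∀ v : D,
      q (g i) v = ν i * (inner ℝ ((g i : H)) ((v : H)) : ℝ))
    (N m : ℕ) (hN : 1 ≤ N) (hm : 1 ≤ m)
    (F : Submodule ℝ D) (hdim : Module.finrank ℝ F = m)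
    (ξ : ℕ → ℝ) (hξ : ∀ i j : ℕ, 1 ≤ i → i ≤ j → j ≤ m → ξ i ≤ ξ j)
    (f : ℕ → F)
    (hf_orth : Orthonormal ℝ (fun i : Fin m => (((f ((i : ℕ) + 1) : D) : H))))
    (hf_span : Submodule.span ℝ (Set.range (fun i : Fin m => f ((i : ℕ) + 1)))
      = (⊤ : Submodule ℝ F))
    (hf_eig : ∀ i : ℕ, 1 ≤ i → i ≤ m → ∀ w : F,
      q (f i : D) (w : D) = ξ i * (inner ℝ (((f i : D) : H)) (((w : D) : H)) : ℝ))
    (γ δ : ℝ) (hγ : 0 < γ) (hδ : 0 < δ) (hδγ : δ < γ / Real.sqrt 2)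
    (hH2a : ∀ i : ℕ, 1 ≤ i → i ≤ m → |ν (N + i - 1)| ≤ γ)
    (hH2b : γ ≤ ν (N + m))
    (hH2c : 2 ≤ N → ν (N - 1) ≤ -γ)
    (hH3 : ∀ (w : D) (φ : F), |q (φ : D) w| ≤ δ * ‖((φ : D) : H)‖ * ‖(w : H)‖) :
    ∀ i : ℕ, 1 ≤ i → i ≤ m → |ν (N + i - 1) - ξ i| ≤ 4 * δ ^ 2 / γ := by
  intro i hi1 him
  set aL : ℕ → (F →ₗ[ℝ] ℝ) := fun j =>
    ((innerSL ℝ ((g (j+1) : H))).toLinearMap).comp (D.subtype.comp F.subtype) with haLdef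
  set cL : Fin m → (F →ₗ[ℝ] ℝ) := fun k =>
    ((innerSL ℝ (((f ((k:ℕ)+1) : D) : H))).toLinearMap).comp (D.subtype.comp F.subtype)
    with hcLdef
  have haLa : ∀ (j : ℕ) (φ : F), aL j φ = (inner ℝ ((g (j+1) : H)) (((φ:D) : H)) : ℝ) :=
    fun _ _ => rfl
  have hcLa : ∀ (k : Fin m) (φ : F),
      cL k φ = (inner ℝ (((f ((k:ℕ)+1) : D) : H)) (((φ:D) : H)) : ℝ) := fun _ _ => rfl
  have habs' := abs_le.mp (hH2a i hi1 him)
  have h2δ : 2*δ^2 ≤ 4*δ^2 := by nlinarith [sq_nonneg δ]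
  -- Direction 1 : ξ i ≤ ν (N+i-1) + 2δ²/γ
  have dir1 : (ξ i - ν (N + i - 1)) * γ ≤ 2 * δ^2 := by
    obtain ⟨φ, hφ0, hφ1, hφ2⟩ := aux_ker2 hdim (show (i-1) + (m-i) < m by omega)
      (LinearMap.pi (fun t : Fin (i-1) => cL ⟨(t:ℕ), by omega⟩))
      (LinearMap.pi (fun t : Fin (m-i) => aL (N+i-1+(t:ℕ))))
    have hc0 : ∀ k : Fin m, (k:ℕ)+1 < i →
        (inner ℝ (((f ((k:ℕ)+1) : D) : H)) (((φ:D) : H)) : ℝ) = 0 := by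
      intro k hk
      have h : cL ⟨(k:ℕ), by omega⟩ φ = 0 := congrFun hφ1 ⟨(k:ℕ), by omega⟩
      rw [← hcLa]
      exact h
    have ha0 : ∀ j : ℕ, N+i-1 ≤ j → j < N+m-1 →
        (inner ℝ ((g (j+1) : H)) (((φ:D) : H)) : ℝ) = 0 := by
      intro j hj1 hj2
      have h : aL (N+i-1+(j-(N+i-1))) φ = 0 := congrFun hφ2 ⟨j-(N+i-1), by omega⟩
      rw [show N+i-1+(j-(N+i-1)) = j by omega] at h
      rw [← haLa]
      exact h
    obtain ⟨R, hqeq, hT1, hWge, hWle⟩ := aux_core D q hsymm ν hν g hg_orth hg_tot hg_eig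
      N m hN hm F γ δ hγ hδ hH2b hH2c hH3 φ
    obtain ⟨hqfin, hnfin⟩ := aux_fin D q m F ξ f hf_orth hf_span hf_eig φ
    set n2 : ℝ := ‖((φ:D) : H)‖^2 with hn2def
    set sW : ℝ := ∑ j ∈ Finset.Ico (N-1) (N+m-1),
      (inner ℝ ((g (j+1) : H)) (((φ:D) : H)) : ℝ)^2 with hsWdef
    set W : ℝ := ∑ j ∈ Finset.Ico (N-1) (N+m-1),
      ν (j+1) * (inner ℝ ((g (j+1) : H)) (((φ:D) : H)) : ℝ)^2 with hWdef
    have hn2 : 0 < n2 := by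
      have hD : ((φ:D) : H) ≠ 0 := by
        simp only [ne_eq, Submodule.coe_eq_zero]
        exact hφ0
      rw [hn2def]
      exact pow_pos (norm_pos_iff.mpr hD) 2
    have h1 : ξ i * n2 ≤ q (φ:D) (φ:D) := by
      rw [hqfin, hnfin, Finset.mul_sum]
      apply Finset.sum_le_sum
      intro k _
      by_cases hk : (k:ℕ)+1 < i
      · rw [hc0 k hk]
        simp
      · exact mul_le_mul_of_nonneg_right (hξ i ((k:ℕ)+1) hi1 (by omega) (by omega))
          (sq_nonneg _)
    have h2 : W ≤ ν (N+i-1) * sW := by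
      rw [hWdef, hsWdef, Finset.mul_sum]
      apply Finset.sum_le_sum
      intro j hj
      rw [Finset.mem_Ico] at hj
      by_cases hj2 : N+i-1 ≤ j
      · rw [ha0 j hj2 hj.2]
        simp
      · exact mul_le_mul_of_nonneg_right (hν (j+1) (N+i-1) (by omega) (by omega))
          (sq_nonneg _)
    clear_value n2 sW W
    have s1 : ξ i * n2 ≤ ν (N+i-1) * sW + R := by linarith [h1, h2, hqeq.le, hqeq.ge]
    have s2 : γ * R ≤ δ^2 * n2 :=
      le_trans (mul_le_mul_of_nonneg_left (le_abs_self R) hγ.le) hT1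
    clear hφ1 hφ2 hc0 ha0 h1 h2 hqfin hnfin hqeq hT1
    have s3 : γ * (ν (N+i-1) * sW) ≤ γ * (ν (N+i-1) * n2) + δ^2 * n2 := by
      nlinarith [hWge, hWle, habs'.1, habs'.2, hγ,
        mul_nonneg (mul_nonneg (by linarith [habs'.1] : (0:ℝ) ≤ γ + ν (N+i-1)) hγ.le)
          (by linarith [hWle] : (0:ℝ) ≤ n2 - sW)]
    have s4 := mul_le_mul_of_nonneg_left s1 hγ.le
    have s5 : (ξ i - ν (N+i-1)) * γ * n2 ≤ 2*δ^2 * n2 := by nlinarith [s2, s3, s4]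
    exact le_of_mul_le_mul_right s5 hn2
  -- Direction 2 : ν (N+i-1) ≤ ξ i + 2δ²/γ
  have dir2 : (ν (N + i - 1) - ξ i) * γ ≤ 2 * δ^2 := by
    obtain ⟨φ, hφ0, hφ1, hφ2⟩ := aux_ker2 hdim (show (i-1) + (m-i) < m by omega)
      (LinearMap.pi (fun t : Fin (i-1) => aL (N-1+(t:ℕ))))
      (LinearMap.pi (fun t : Fin (m-i) => cL ⟨i+(t:ℕ), by omega⟩))
    have ha0 : ∀ j : ℕ, N-1 ≤ j → j < N+i-2 →
        (inner ℝ ((g (j+1) : H)) (((φ:D) : H)) : ℝ) = 0 := by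
      intro j hj1 hj2
      have h : aL (N-1+(j-(N-1))) φ = 0 := congrFun hφ1 ⟨j-(N-1), by omega⟩
      rw [show N-1+(j-(N-1)) = j by omega] at h
      rw [← haLa]
      exact h
    have hc0 : ∀ k : Fin m, i ≤ (k:ℕ) →
        (inner ℝ (((f ((k:ℕ)+1) : D) : H)) (((φ:D) : H)) : ℝ) = 0 := by
      intro k hk
      have h : cL ⟨i+((k:ℕ)-i), by omega⟩ φ = 0 := congrFun hφ2 ⟨(k:ℕ)-i, by omega⟩
      have he : (⟨i+((k:ℕ)-i), by omega⟩ : Fin m) = k :=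
        Fin.ext (show i+((k:ℕ)-i) = (k:ℕ) by omega)
      rw [he] at h
      rw [← hcLa]
      exact h
    obtain ⟨R, hqeq, hT1, hWge, hWle⟩ := aux_core D q hsymm ν hν g hg_orth hg_tot hg_eig
      N m hN hm F γ δ hγ hδ hH2b hH2c hH3 φ
    obtain ⟨hqfin, hnfin⟩ := aux_fin D q m F ξ f hf_orth hf_span hf_eig φ
    set n2 : ℝ := ‖((φ:D) : H)‖^2 with hn2def
    set sW : ℝ := ∑ j ∈ Finset.Ico (N-1) (N+m-1),
      (inner ℝ ((g (j+1) : H)) (((φ:D) : H)) : ℝ)^2 with hsWdef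
    set W : ℝ := ∑ j ∈ Finset.Ico (N-1) (N+m-1),
      ν (j+1) * (inner ℝ ((g (j+1) : H)) (((φ:D) : H)) : ℝ)^2 with hWdef
    have hn2 : 0 < n2 := by
      have hD : ((φ:D) : H) ≠ 0 := by
        simp only [ne_eq, Submodule.coe_eq_zero]
        exact hφ0
      rw [hn2def]
      exact pow_pos (norm_pos_iff.mpr hD) 2
    have h1 : q (φ:D) (φ:D) ≤ ξ i * n2 := by
      rw [hqfin, hnfin, Finset.mul_sum]
      apply Finset.sum_le_sum
      intro k _
      by_cases hk : i ≤ (k:ℕ)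
      · rw [hc0 k hk]
        simp
      · exact mul_le_mul_of_nonneg_right (hξ ((k:ℕ)+1) i (by omega) (by omega) him)
          (sq_nonneg _)
    have h2 : ν (N+i-1) * sW ≤ W := by
      rw [hWdef, hsWdef, Finset.mul_sum]
      apply Finset.sum_le_sum
      intro j hj
      rw [Finset.mem_Ico] at hj
      by_cases hj2 : j < N+i-2
      · rw [ha0 j hj.1 hj2]
        simp
      · exact mul_le_mul_of_nonneg_right (hν (N+i-1) (j+1) (by omega) (by omega))
          (sq_nonneg _)
    clear_value n2 sW W
    have s1 : ν (N+i-1) * sW + R ≤ ξ i * n2 := by linarith [h1, h2, hqeq.le, hqeq.ge]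
    have s2 : -(δ^2 * n2) ≤ γ * R := by
      have h := mul_le_mul_of_nonneg_left (neg_abs_le R) hγ.le
      nlinarith [hT1, h]
    clear hφ1 hφ2 hc0 ha0 h1 h2 hqfin hnfin hqeq hT1
    have s3 : γ * (ν (N+i-1) * n2) - δ^2 * n2 ≤ γ * (ν (N+i-1) * sW) := by
      nlinarith [hWge, hWle, habs'.1, habs'.2, hγ,
        mul_nonneg (mul_nonneg (by linarith [habs'.2] : (0:ℝ) ≤ γ - ν (N+i-1)) hγ.le)
          (by linarith [hWle] : (0:ℝ) ≤ n2 - sW)]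
    have s4 := mul_le_mul_of_nonneg_left s1 hγ.le
    have s5 : (ν (N+i-1) - ξ i) * γ * n2 ≤ 2*δ^2 * n2 := by nlinarith [s2, s3, s4]
    exact le_of_mul_le_mul_right s5 hn2
  rw [abs_le]
  constructor
  · have h := (le_div_iff₀ hγ).mpr (le_trans dir1 h2δ)
    linarith [h]
  · exact (le_div_iff₀ hγ).mpr (le_trans dir2 h2δ)
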